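/- Assume Q > 0, N > 1 + 2/√3, 0 < ε < 1/N, β > 0, and 0 < βM_T < βM_{T₁,ε} = Q(N + 1 − 2εN − 2√((1−εN)(1−ε)N)). Then the discriminant Δ(ε) = (Q(N−1) − βM_T)² − 4Q·βM_T·(1−εN) is strictly positive, and the quadratic ((1−r)γ/μ_M)A² − (Q(N−1) − βM_T)A + βM_T((γ+μ_{A,1})/μ_{A,2})(1−εN) has two distinct real roots A_{1,ε} < A_{2,ε} which are both strictly positive. -/

import Mathlib

set_option maxHeartbeats 1000000

lemma quadroot_aux (a b c s : ℝ) (ha : a ≠ 0) (hs : s ^ 2 = b ^ 2 - 4 * a * c) :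
    a * ((b + s) / (2 * a)) ^ 2 - b * ((b + s) / (2 * a)) + c = 0 := by
  field_simp
  linear_combination hs

theorem stmt10 (r γ μM μA1 μA2 Q N ε β MT : ℝ)
    (hr0 : 0 < r) (hr1 : r < 1) (hγ : 0 < γ) (hμM : 0 < μM)
    (hμA1 : 0 < μA1) (hμA2 : 0 < μA2)
    (hQ : Q = (1 - r) * γ * (γ + μA1) / (μA2 * μM))
    (hN : 1 + 2 / Real.sqrt 3 < N)
    (hε0 : 0 < ε) (hε : ε < 1 / N) (hβ : 0 < β)
    (hMT0 : 0 < β * MT)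
    (hMT1 : β * MT
      < Q * (N + 1 - 2 * ε * N - 2 * Real.sqrt ((1 - ε * N) * (1 - ε) * N))) :
    0 < (Q * (N - 1) - β * MT) ^ 2 - 4 * Q * (β * MT) * (1 - ε * N) ∧
    ∃ A₁ A₂ : ℝ, A₁ < A₂ ∧ 0 < A₁ ∧ 0 < A₂ ∧
      ((1 - r) * γ / μM) * A₁ ^ 2 - (Q * (N - 1) - β * MT) * A₁
        + β * MT * ((γ + μA1) / μA2) * (1 - ε * N) = 0 ∧
      ((1 - r) * γ / μM) * A₂ ^ 2 - (Q * (N - 1) - β * MT) * A₂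
        + β * MT * ((γ + μA1) / μA2) * (1 - ε * N) = 0 := by
  have h3 : (0:ℝ) < 2 / Real.sqrt 3 := by positivity
  have hN1 : 1 < N := by linarith
  have hN0 : 0 < N := by linarith
  have hεN : ε * N < 1 := (lt_div_iff₀ hN0).mp hε
  have hε1 : ε < 1 := by nlinarith
  have h1r : 0 < 1 - r := by linarith
  have hQpos : 0 < Q := by
    rw [hQ]
    apply div_pos
    · exact mul_pos (mul_pos h1r hγ) (by linarith)
    · exact mul_pos hμA2 hμM
  set st := Real.sqrt ((1 - ε * N) * (1 - ε) * N) with hstdef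
  have hstnn : 0 ≤ st := Real.sqrt_nonneg _
  have htpos : 0 < (1 - ε * N) * (1 - ε) * N :=
    mul_pos (mul_pos (by linarith) (by linarith)) hN0
  have hst2 : st ^ 2 = (1 - ε * N) * (1 - ε) * N := Real.sq_sqrt htpos.le
  have hstge : 1 - ε * N ≤ st := by
    nlinarith [hst2, hstnn, mul_pos (show (0:ℝ) < 1 - ε * N by linarith)
      (show (0:ℝ) < N - 1 by linarith)]
  have hbpos : 0 < Q * (N - 1) - β * MT := by
    nlinarith [hMT1, mul_nonneg hQpos.le (show (0:ℝ) ≤ st - (1 - ε * N) by linarith)]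
  have hΔ : (Q * (N - 1) - β * MT) ^ 2 - 4 * Q * (β * MT) * (1 - ε * N)
      = (Q * (N + 1 - 2 * ε * N - 2 * st) - β * MT)
        * (Q * (N + 1 - 2 * ε * N + 2 * st) - β * MT) := by
    linear_combination (4 * Q ^ 2) * hst2
  have hΔpos : 0 < (Q * (N - 1) - β * MT) ^ 2 - 4 * Q * (β * MT) * (1 - ε * N) := by
    rw [hΔ]
    have h1 : 0 < Q * (N + 1 - 2 * ε * N - 2 * st) - β * MT := by nlinarith [hMT1]
    have h2 : 0 < Q * (N + 1 - 2 * ε * N + 2 * st) - β * MT := by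
      nlinarith [mul_nonneg hQpos.le hstnn]
    exact mul_pos h1 h2
  refine ⟨hΔpos, ?_⟩
  have hapos : 0 < (1 - r) * γ / μM := div_pos (mul_pos h1r hγ) hμM
  have h2a : 0 < 2 * ((1 - r) * γ / μM) := by linarith
  have hcpos : 0 < β * MT * ((γ + μA1) / μA2) * (1 - ε * N) :=
    mul_pos (mul_pos hMT0 (div_pos (by linarith) hμA2)) (by linarith)
  have hac : ((1 - r) * γ / μM) * (β * MT * ((γ + μA1) / μA2) * (1 - ε * N))
      = Q * (β * MT) * (1 - ε * N) := by
    rw [hQ]; field_simp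
  set sD := Real.sqrt ((Q * (N - 1) - β * MT) ^ 2 - 4 * Q * (β * MT) * (1 - ε * N))
    with hsDdef
  have hsD2 : sD ^ 2 = (Q * (N - 1) - β * MT) ^ 2 - 4 * Q * (β * MT) * (1 - ε * N) :=
    Real.sq_sqrt hΔpos.le
  have hsDpos : 0 < sD := Real.sqrt_pos.mpr hΔpos
  have hs' : sD ^ 2 = (Q * (N - 1) - β * MT) ^ 2
      - 4 * ((1 - r) * γ / μM) * (β * MT * ((γ + μA1) / μA2) * (1 - ε * N)) := by
    rw [hsD2]; linear_combination 4 * hac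
  have hs'' : (-sD) ^ 2 = (Q * (N - 1) - β * MT) ^ 2
      - 4 * ((1 - r) * γ / μM) * (β * MT * ((γ + μA1) / μA2) * (1 - ε * N)) := by
    rw [neg_pow]; simpa using hs'
  have hbgt : sD < Q * (N - 1) - β * MT := by
    nlinarith [hsD2, hbpos, hsDpos, mul_pos (mul_pos hQpos hMT0)
      (show (0:ℝ) < 1 - ε * N by linarith)]
  refine ⟨(Q * (N - 1) - β * MT + -sD) / (2 * ((1 - r) * γ / μM)),
    (Q * (N - 1) - β * MT + sD) / (2 * ((1 - r) * γ / μM)), ?_, ?_, ?_, ?_, ?_⟩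
  · rw [div_lt_div_iff₀ h2a h2a]
    nlinarith [mul_pos hsDpos h2a]
  · exact div_pos (by linarith) h2a
  · exact div_pos (by linarith) h2a
  · exact quadroot_aux ((1 - r) * γ / μM) (Q * (N - 1) - β * MT)
      (β * MT * ((γ + μA1) / μA2) * (1 - ε * N)) (-sD) hapos.ne' hs''
  · exact quadroot_aux ((1 - r) * γ / μM) (Q * (N - 1) - β * MT)
      (β * MT * ((γ + μA1) / μA2) * (1 - ε * N)) sD hapos.ne' hs'
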